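/- arXiv:math/0502163 — 2 statements merged into one kernel-verified Lean document; each statement's English description precedes it below -/
import Mathlib

section
/- Let f : ℕ → ℤ[q^{±1}] satisfy a q-linear difference equation Σ_{j=0}^d a_j(q^n, q) f(n+j) = 0 for all n, where the a_j(u,v) are polynomials and a_d is a nonzero monomial (or invertible). Then there exists a constant C' such that for all n, the maximal q-degree of f(n) is at most C'(n+1)², i.e., maxdeg_q f(n) = O(n²). -/
open Finset LaurentPolynomial

noncomputable def substQ (p : MvPolynomial (Fin 2) ℚ) (n : ℕ) : LaurentPolynomial ℚ :=
  MvPolynomial.aeval ![LaurentPolynomial.T (n : ℤ), LaurentPolynomial.T 1] p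

noncomputable def toQ (f : LaurentPolynomial ℤ) : LaurentPolynomial ℚ :=
  AddMonoidAlgebra.ofCoeff (Finsupp.mapRange (Int.cast : ℤ → ℚ) (by simp) f.coeff)

namespace QHoloAux

/-- `Bdd p M` : every exponent in the support of `p` is at most `M`. -/
def Bdd (p : LaurentPolynomial ℚ) (M : ℤ) : Prop := ∀ k ∈ p.coeff.support, k ≤ M

lemma Bdd.mono {p : LaurentPolynomial ℚ} {M N : ℤ} (h : Bdd p M) (hMN : M ≤ N) :
    Bdd p N := fun k hk => (h k hk).trans hMN

lemma bdd_zero (M : ℤ) : Bdd 0 M := by simp [Bdd]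

lemma bdd_C_mul_T (c : ℚ) (m : ℤ) : Bdd (C c * T m) m := by
  intro k hk
  have := LaurentPolynomial.support_C_mul_T c m hk
  exact le_of_eq (Finset.mem_singleton.1 this)

lemma bdd_T (m : ℤ) : Bdd (T m) m := by
  have := bdd_C_mul_T 1 m
  simpa using this

lemma bdd_C (c : ℚ) : Bdd (C c) 0 := by
  have := bdd_C_mul_T c 0
  simpa using this

lemma bdd_one : Bdd 1 0 := by simpa using bdd_C 1

lemma Bdd.mul {p q : LaurentPolynomial ℚ} {M N : ℤ} (hp : Bdd p M) (hq : Bdd q N) :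
    Bdd (p * q) (M + N) := by
  classical
  intro k hk
  have := AddMonoidAlgebra.support_coeff_mul_subset p q hk
  rw [Finset.mem_add] at this
  obtain ⟨x, hx, y, hy, rfl⟩ := this
  exact add_le_add (hp x hx) (hq y hy)

lemma Bdd.add {p q : LaurentPolynomial ℚ} {M : ℤ} (hp : Bdd p M) (hq : Bdd q M) :
    Bdd (p + q) M := by
  intro k hk
  rw [AddMonoidAlgebra.coeff_add] at hk
  rcases Finset.mem_union.1 (Finsupp.support_add hk) with h | h
  · exact hp k h
  · exact hq k h

lemma Bdd.neg {p : LaurentPolynomial ℚ} {M : ℤ} (hp : Bdd p M) : Bdd (-p) M := by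
  intro k hk
  rw [AddMonoidAlgebra.coeff_neg, Finsupp.support_neg] at hk
  exact hp k hk

lemma bdd_sum {ι : Type*} (s : Finset ι) (F : ι → LaurentPolynomial ℚ) (M : ℤ)
    (h : ∀ i ∈ s, Bdd (F i) M) : Bdd (∑ i ∈ s, F i) M :=
  Finset.sum_induction F (fun p => Bdd p M) (fun _ _ => Bdd.add) (bdd_zero M) h

lemma bdd_substQ (p : MvPolynomial (Fin 2) ℚ) (n : ℕ) :
    Bdd (substQ p n) ((p.totalDegree : ℤ) * ((n : ℤ) + 1)) := by
  rw [substQ, MvPolynomial.aeval_def, MvPolynomial.eval₂_eq']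
  apply bdd_sum
  intro e he
  have hsum : (e 0 : ℤ) + (e 1 : ℤ) ≤ (p.totalDegree : ℤ) := by
    have h1 : e.sum (fun _ k => k) ≤ p.totalDegree := MvPolynomial.le_totalDegree he
    have h2 : e.sum (fun _ k => k) = e 0 + e 1 := by
      rw [Finsupp.sum_fintype _ _ (fun _ => rfl), Fin.sum_univ_two]
    omega
  have hterm : (algebraMap ℚ (LaurentPolynomial ℚ)) (MvPolynomial.coeff e p) *
      ∏ i, (![LaurentPolynomial.T (n : ℤ), LaurentPolynomial.T 1] i) ^ e i =
      C (MvPolynomial.coeff e p) * T ((e 0 : ℤ) * n + (e 1 : ℤ)) := by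
    rw [Fin.prod_univ_two]
    simp only [Matrix.cons_val_zero, Matrix.cons_val_one, Matrix.head_cons, T_pow]
    rw [← T_add]
    norm_num
  rw [hterm]
  refine (bdd_C_mul_T _ _).mono ?_
  have h0 : (0:ℤ) ≤ (e 0 : ℤ) := by positivity
  have h1 : (0:ℤ) ≤ (e 1 : ℤ) := by positivity
  have hn : (0:ℤ) ≤ (n : ℤ) := by positivity
  nlinarith

lemma substQ_monomial (e : Fin 2 →₀ ℕ) (c : ℚ) (n : ℕ) :
    substQ (MvPolynomial.monomial e c) n = C c * T ((e 0 : ℤ) * n + (e 1 : ℤ)) := by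
  rw [substQ, MvPolynomial.aeval_monomial]
  rw [Finsupp.prod_fintype _ _ (fun _ => pow_zero _), Fin.prod_univ_two]
  simp only [Matrix.cons_val_zero, Matrix.cons_val_one, Matrix.head_cons, T_pow]
  rw [← T_add]
  norm_num

end QHoloAux

open QHoloAux
/-- If `f : ℕ → ℤ[q^{±1}]` is annihilated by a linear `q`-difference equation
`Σ_{j=0}^d a_j(q^n, q) f(n+j) = 0` whose leading coefficient `a_d` is a nonzero
monomial, then the maximal `q`-degree of `f(n)` grows at most quadratically. -/
theorem maxdeg_qholonomic_quadratic
    (f : ℕ → LaurentPolynomial ℤ) (d : ℕ)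
    (a : Fin (d + 1) → MvPolynomial (Fin 2) ℚ)
    (ha : ∃ (c : ℚ) (e : Fin 2 →₀ ℕ), c ≠ 0 ∧
      a (Fin.last d) = MvPolynomial.monomial e c)
    (hrec : ∀ n : ℕ, ∑ j : Fin (d + 1), substQ (a j) n * toQ (f (n + j)) = 0) :
    ∃ C' : ℝ, ∀ n : ℕ, ∀ k ∈ (f n).coeff.support, (k : ℝ) ≤ C' * (n + 1) ^ 2 := by
  classical
  obtain ⟨c, e, hc, hlast⟩ := ha
  set g : ℕ → LaurentPolynomial ℚ := fun n => toQ (f n) with hg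
  -- initial bound
  set S : Finset ℤ := (Finset.range d).biUnion (fun i => (g i).coeff.support) with hS
  set C0 : ℤ := (insert (0:ℤ) S).max' ⟨0, Finset.mem_insert_self _ _⟩ with hC0
  have hC0nonneg : (0:ℤ) ≤ C0 := Finset.le_max' _ _ (Finset.mem_insert_self _ _)
  have hbase : ∀ i < d, Bdd (g i) C0 := by
    intro i hi k hk
    exact Finset.le_max' _ _ (Finset.mem_insert_of_mem
      (Finset.mem_biUnion.2 ⟨i, Finset.mem_range.2 hi, hk⟩))
  set A : ℕ := Finset.univ.sup (fun j => (a j).totalDegree) with hA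
  have hAj : ∀ j, (a j).totalDegree ≤ A := fun j => Finset.le_sup (f := fun j => (a j).totalDegree) (Finset.mem_univ j)
  have hAnn : (0:ℤ) ≤ (A:ℤ) := by positivity
  -- main induction
  have key : ∀ n : ℕ, Bdd (g n) (C0 + (A:ℤ) * (n:ℤ)^2) := by
    intro n
    induction n using Nat.strong_induction_on with
    | _ n ih =>
      rcases lt_or_ge n d with h | h
      · exact (hbase n h).mono (by nlinarith)
      · obtain ⟨m, rfl⟩ : ∃ m, n = m + d := ⟨n - d, (Nat.sub_add_cancel h).symm⟩
        set N : ℤ := (e 0 : ℤ) * m + (e 1 : ℤ) with hN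
        have hNnn : 0 ≤ N := by positivity
        have hrecm := hrec m
        rw [Fin.sum_univ_castSucc] at hrecm
        simp only [Fin.val_last] at hrecm
        rw [hlast, substQ_monomial, ← hN] at hrecm
        have hx : C c * T N * toQ (f (m + d)) =
            -(∑ j : Fin d, substQ (a j.castSucc) m * toQ (f (m + (j.castSucc : ℕ)))) :=
          eq_neg_of_add_eq_zero_right hrecm
        have hunit : (C c⁻¹ * T (-N)) * (C c * T N) = 1 := by
          have h1 : (C c⁻¹ * T (-N)) * (C c * T N) = C (c⁻¹ * c) * (T (-N) * T N) := by
            rw [map_mul]; ring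
          rw [h1, ← T_add, neg_add_cancel, inv_mul_cancel₀ hc]
          simp
        have hgnd : g (m + d) = (C c⁻¹ * T (-N)) *
            (-(∑ j : Fin d, substQ (a j.castSucc) m * toQ (f (m + (j.castSucc : ℕ))))) := by
          calc g (m + d) = 1 * toQ (f (m + d)) := (one_mul _).symm
            _ = ((C c⁻¹ * T (-N)) * (C c * T N)) * toQ (f (m + d)) := by rw [hunit]
            _ = (C c⁻¹ * T (-N)) * (C c * T N * toQ (f (m + d))) := by ring
            _ = _ := by rw [hx]
        have hterm : ∀ j : Fin d, Bdd (substQ (a j.castSucc) m * toQ (f (m + (j.castSucc : ℕ))))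
            (C0 + (A:ℤ) * ((m:ℤ) + (d:ℤ))^2) := by
          intro j
          have h1 : Bdd (substQ (a j.castSucc) m) ((A:ℤ) * ((m:ℤ) + 1)) := by
            refine (bdd_substQ _ m).mono ?_
            have hle : ((a j.castSucc).totalDegree : ℤ) ≤ (A:ℤ) := by exact_mod_cast hAj j.castSucc
            have hm : (0:ℤ) ≤ (m:ℤ) + 1 := by positivity
            nlinarith
          have hlt : m + (j.castSucc : ℕ) < m + d := by
            have := j.is_lt
            simp only [Fin.coe_castSucc]
            omega
          have h2 := ih (m + (j.castSucc : ℕ)) hlt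
          refine (h1.mul h2).mono ?_
          have hj : ((j.castSucc : ℕ) : ℤ) ≤ (d:ℤ) - 1 := by
            have := j.is_lt
            simp only [Fin.coe_castSucc]
            omega
          have hm0 : (0:ℤ) ≤ (m:ℤ) := by positivity
          have hj0 : (0:ℤ) ≤ ((j.castSucc : ℕ) : ℤ) := by positivity
          push_cast
          push_cast at hj
          nlinarith [sq_nonneg ((m:ℤ) + (d:ℤ) - 1 - ((j.castSucc : ℕ) : ℤ)),
            mul_le_mul_of_nonneg_left (sq_le_sq' (by nlinarith) (by nlinarith :
              (m:ℤ) + ((j.castSucc : ℕ) : ℤ) ≤ (m:ℤ) + (d:ℤ) - 1)) hAnn]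
        have hSbdd := (bdd_sum Finset.univ _ _ (fun j _ => hterm j)).neg
        have hfin := ((bdd_C c⁻¹).mul (bdd_T (-N))).mul hSbdd
        show Bdd (g (m + d)) _
        rw [hgnd]
        refine hfin.mono ?_
        push_cast
        linarith
  -- conclusion
  refine ⟨((C0 + (A:ℤ) : ℤ) : ℝ), ?_⟩
  intro n k hk
  have hk' : k ∈ (g n).coeff.support := by
    show k ∈ (toQ (f n)).coeff.support
    rw [toQ, AddMonoidAlgebra.coeff_ofCoeff, Finsupp.support_mapRange_of_injective Int.cast_zero _ Int.cast_injective]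
    exact hk
  have h1 : (k : ℤ) ≤ C0 + (A:ℤ) * (n:ℤ)^2 := key n k hk'
  have h2 : C0 + (A:ℤ) * (n:ℤ)^2 ≤ (C0 + A) * ((n:ℤ)+1)^2 := by
    have hn : (0:ℤ) ≤ (n:ℤ) := by positivity
    nlinarith
  have := h1.trans h2
  push_cast
  exact_mod_cast this
end

section
/- The number of partitions p(k) satisfies p(k) ≤ e^{π√(2k/3)} for all k ≥ 1 (up to a bounded multiplicative constant; in fact p(k) ≤ e^{π√(2k/3)} holds exactly). -/
open Real

namespace PartitionBoundAux

/-- Each part of a partition of `n` lies in `[1, n]`. -/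
lemma part_mem_Icc {n : ℕ} (p : Nat.Partition n) {a : ℕ} (ha : a ∈ p.parts) :
    a ∈ Finset.Icc 1 n := by
  refine Finset.mem_Icc.2 ⟨p.parts_pos ha, ?_⟩
  have := Multiset.single_le_sum (fun x _ => Nat.zero_le x) a ha
  rwa [p.parts_sum] at this

/-- The weighted sum of multiplicities recovers `n`. -/
lemma sum_count_mul {n : ℕ} (p : Nat.Partition n) :
    ∑ i : Fin n, p.parts.count (i.1 + 1) * (i.1 + 1) = n := by
  have h1 : ∑ i : Fin n, p.parts.count (i.1 + 1) * (i.1 + 1)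
      = ∑ j ∈ Finset.range n, p.parts.count (j + 1) * (j + 1) :=
    Fin.sum_univ_eq_sum_range (fun j => p.parts.count (j + 1) * (j + 1)) n
  have h2 : ∑ a ∈ Finset.Icc 1 n, p.parts.count a * a
      = ∑ j ∈ Finset.range n, p.parts.count (j + 1) * (j + 1) := by
    rw [show Finset.Icc 1 n = Finset.Ico 1 (n + 1) by rfl, Finset.sum_Ico_eq_sum_range]
    simp [Nat.add_comm 1]
  have h3 : ∑ a ∈ p.parts.toFinset, p.parts.count a * a
      = ∑ a ∈ Finset.Icc 1 n, p.parts.count a * a := by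
    refine Finset.sum_subset ?_ ?_
    · intro a ha
      exact part_mem_Icc p (Multiset.mem_toFinset.1 ha)
    · intro a _ ha
      have : a ∉ p.parts := fun h => ha (Multiset.mem_toFinset.2 h)
      simp [Multiset.count_eq_zero_of_notMem this]
  have h4 : p.parts.sum = ∑ a ∈ p.parts.toFinset, p.parts.count a * a := by
    conv_lhs => rw [show p.parts.sum = (p.parts.map id).sum by simp]
    rw [Finset.sum_multiset_map_count]
    simp [mul_comm]
  rw [h1, ← h2, ← h3, ← h4, p.parts_sum]

/-- Multiplicities are at most `n`. -/
lemma count_le {n : ℕ} (p : Nat.Partition n) (a : ℕ) : p.parts.count a ≤ n := by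
  calc p.parts.count a ≤ Multiset.card p.parts := Multiset.count_le_card a _
  _ = Multiset.card p.parts * 1 := by ring
  _ ≤ p.parts.sum := Multiset.card_nsmul_le_sum (fun x hx => p.parts_pos hx)
  _ = n := p.parts_sum

/-- The map from partitions to multiplicity vectors is injective. -/
lemma count_inj {n : ℕ} :
    Function.Injective (fun p : Nat.Partition n => fun i : Fin n => p.parts.count (i.1 + 1)) := by
  intro p q h
  ext a
  by_cases hcase : 1 ≤ a ∧ a ≤ n
  · have hi : a - 1 < n := by omega
    have := congrFun h ⟨a - 1, hi⟩
    simpa [Nat.sub_add_cancel hcase.1] using this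
  · have hp : a ∉ p.parts := fun hm => hcase (Finset.mem_Icc.1 (part_mem_Icc p hm))
    have hq : a ∉ q.parts := fun hm => hcase (Finset.mem_Icc.1 (part_mem_Icc q hm))
    rw [Multiset.count_eq_zero_of_notMem hp, Multiset.count_eq_zero_of_notMem hq]

/-- Counting bound: `p(n) · xⁿ` is at most the truncated generating function product. -/
lemma card_mul_le (n : ℕ) (x : ℝ) (hx : 0 ≤ x) :
    (Fintype.card (Nat.Partition n) : ℝ) * x ^ n ≤
      ∏ i : Fin n, ∑ j ∈ Finset.range (n + 1), x ^ (j * (i.1 + 1)) := by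
  classical
  rw [Finset.prod_univ_sum]
  set φ : Nat.Partition n → (Fin n → ℕ) := fun p i => p.parts.count (i.1 + 1) with hφ
  have himg : (Finset.univ.image φ) ⊆ Fintype.piFinset (fun _ : Fin n => Finset.range (n + 1)) := by
    intro g hg
    rw [Finset.mem_image] at hg
    obtain ⟨p, _, rfl⟩ := hg
    refine Fintype.mem_piFinset.2 fun i => ?_
    exact Finset.mem_range.2 (Nat.lt_succ_of_le (count_le p _))
  have hval : ∀ p : Nat.Partition n,
      (∏ i : Fin n, x ^ (φ p i * (i.1 + 1))) = x ^ n := by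
    intro p
    rw [Finset.prod_pow_eq_pow_sum, sum_count_mul p]
  have h1 : (Fintype.card (Nat.Partition n) : ℝ) * x ^ n
      = ∑ g ∈ Finset.univ.image φ, ∏ i : Fin n, x ^ (g i * (i.1 + 1)) := by
    rw [Finset.sum_image (fun p _ q _ h => count_inj h)]
    have hval' := hval
    simp only [hφ] at hval'
    simp [hval', Finset.card_univ]
  rw [h1]
  exact Finset.sum_le_sum_of_subset_of_nonneg himg
    (fun g _ _ => Finset.prod_nonneg fun i _ => pow_nonneg hx _)

/-- Truncated geometric sums are bounded by the full geometric series. -/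
lemma geom_trunc_le (x : ℝ) (hx0 : 0 ≤ x) (hx1 : x < 1) (m N : ℕ) :
    ∑ j ∈ Finset.range N, x ^ (j * (m + 1)) ≤ (1 - x ^ (m + 1))⁻¹ := by
  have hy0 : (0 : ℝ) ≤ x ^ (m + 1) := pow_nonneg hx0 _
  have hy1 : x ^ (m + 1) < 1 := pow_lt_one₀ hx0 hx1 (Nat.succ_ne_zero m)
  calc ∑ j ∈ Finset.range N, x ^ (j * (m + 1))
      = ∑ j ∈ Finset.range N, (x ^ (m + 1)) ^ j := by
        refine Finset.sum_congr rfl fun j _ => ?_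
        rw [← pow_mul, Nat.mul_comm]
    _ ≤ ∑' j : ℕ, (x ^ (m + 1)) ^ j :=
        Summable.sum_le_tsum _ (fun j _ => pow_nonneg hy0 j)
          (summable_geometric_of_lt_one hy0 hy1)
    _ = (1 - x ^ (m + 1))⁻¹ := tsum_geometric_of_lt_one hy0 hy1

/-- Bound on the sum over `m ≥ 1` of `1/(m+1)^2` style Basel sum. -/
lemma basel : HasSum (fun m : ℕ => 1 / ((m : ℝ) + 1) ^ 2) (π ^ 2 / 6) := by
  have h2 : HasSum (fun n : ℕ => (1 : ℝ) / ((n + 1 : ℕ) : ℝ) ^ 2) (π ^ 2 / 6) := by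
    refine (hasSum_nat_add_iff (f := fun n : ℕ => (1 : ℝ) / (n : ℝ) ^ 2) 1).2 ?_
    simpa using hasSum_zeta_two
  have heq : (fun m : ℕ => 1 / ((m : ℝ) + 1) ^ 2)
      = (fun n : ℕ => (1 : ℝ) / ((n + 1 : ℕ) : ℝ) ^ 2) := by
    funext m; push_cast; norm_num
  rw [heq]; exact h2

/-- Key logarithmic estimate. -/
lemma log_sum_le (n : ℕ) (x : ℝ) (hx0 : 0 < x) (hx1 : x < 1) :
    ∑ i : Fin n, -Real.log (1 - x ^ (i.1 + 1)) ≤ π ^ 2 / 6 * (x / (1 - x)) := by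
  have hxpow : ∀ i : Fin n, |x ^ (i.1 + 1)| < 1 := by
    intro i
    rw [abs_of_nonneg (pow_nonneg hx0.le _)]
    exact pow_lt_one₀ hx0.le hx1 (Nat.succ_ne_zero _)
  have key : ∀ i : Fin n, HasSum (fun m : ℕ => (x ^ (i.1 + 1)) ^ (m + 1) / (m + 1))
      (-Real.log (1 - x ^ (i.1 + 1))) := fun i =>
    Real.hasSum_pow_div_log_of_abs_lt_one (hxpow i)
  have swap : ∑ i : Fin n, -Real.log (1 - x ^ (i.1 + 1))
      = ∑' m : ℕ, ∑ i : Fin n, (x ^ (i.1 + 1)) ^ (m + 1) / (m + 1) := by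
    calc ∑ i : Fin n, -Real.log (1 - x ^ (i.1 + 1))
        = ∑ i : Fin n, ∑' m : ℕ, (x ^ (i.1 + 1)) ^ (m + 1) / (m + 1) :=
          Finset.sum_congr rfl fun i _ => (key i).tsum_eq.symm
      _ = ∑' m : ℕ, ∑ i : Fin n, (x ^ (i.1 + 1)) ^ (m + 1) / (m + 1) :=
          (Summable.tsum_finsetSum (fun i _ => (key i).summable)).symm
  rw [swap]
  have hx' : 0 < 1 - x := by linarith
  -- pointwise bound
  have hle : ∀ m : ℕ, ∑ i : Fin n, (x ^ (i.1 + 1)) ^ (m + 1) / (m + 1)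
      ≤ 1 / ((m : ℝ) + 1) ^ 2 * (x / (1 - x)) := by
    intro m
    have hm1 : (0 : ℝ) < (m : ℝ) + 1 := by positivity
    set y : ℝ := x ^ (m + 1) with hy
    have hy0 : 0 < y := pow_pos hx0 _
    have hy1 : y < 1 := pow_lt_one₀ hx0.le hx1 (Nat.succ_ne_zero _)
    have hy' : 0 < 1 - y := by linarith
    have hgeom : ∑ i : Fin n, (x ^ (i.1 + 1)) ^ (m + 1) ≤ y / (1 - y) := by
      have hEq : ∀ i : Fin n, (x ^ (i.1 + 1)) ^ (m + 1) = y * y ^ i.1 := by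
        intro i
        rw [hy, ← pow_mul, ← pow_mul, ← pow_add]
        congr 1
        ring
      calc ∑ i : Fin n, (x ^ (i.1 + 1)) ^ (m + 1) = ∑ i : Fin n, y * y ^ i.1 := by
            exact Finset.sum_congr rfl fun i _ => hEq i
        _ = y * ∑ j ∈ Finset.range n, y ^ j := by
            rw [← Finset.mul_sum, Fin.sum_univ_eq_sum_range]
        _ ≤ y * (1 - y)⁻¹ := by
            refine mul_le_mul_of_nonneg_left ?_ hy0.le
            calc ∑ j ∈ Finset.range n, y ^ j ≤ ∑' j : ℕ, y ^ j :=
                  Summable.sum_le_tsum _ (fun j _ => pow_nonneg hy0.le j)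
                    (summable_geometric_of_lt_one hy0.le hy1)
              _ = (1 - y)⁻¹ := tsum_geometric_of_lt_one hy0.le hy1
        _ = y / (1 - y) := by rw [div_eq_mul_inv]
    have hstep : y / (1 - y) ≤ x / (((m : ℝ) + 1) * (1 - x)) := by
      rw [div_le_div_iff₀ hy' (by positivity)]
      -- y * ((m+1)(1-x)) ≤ x * (1-y),  y = x^(m+1)
      have hS : (1 : ℝ) - y = (1 - x) * ∑ i ∈ Finset.range (m + 1), x ^ i := by
        have := geom_sum_mul x (m + 1)
        rw [hy]; nlinarith [this]
      have hSge : ((m : ℝ) + 1) * x ^ m ≤ ∑ i ∈ Finset.range (m + 1), x ^ i := by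
        calc ((m : ℝ) + 1) * x ^ m = ∑ _i ∈ Finset.range (m + 1), x ^ m := by
              rw [Finset.sum_const, Finset.card_range, nsmul_eq_mul]; push_cast; ring
          _ ≤ ∑ i ∈ Finset.range (m + 1), x ^ i := by
              refine Finset.sum_le_sum fun i hi => ?_
              exact pow_le_pow_of_le_one hx0.le hx1.le (Nat.le_of_lt_succ (Finset.mem_range.1 hi))
      have hyx : y = x * x ^ m := by rw [hy]; ring
      calc y * (((m : ℝ) + 1) * (1 - x)) = x * ((1 - x) * (((m : ℝ) + 1) * x ^ m)) := by
            rw [hyx]; ring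
        _ ≤ x * ((1 - x) * ∑ i ∈ Finset.range (m + 1), x ^ i) := by
            refine mul_le_mul_of_nonneg_left ?_ hx0.le
            exact mul_le_mul_of_nonneg_left hSge hx'.le
        _ = x * (1 - y) := by rw [hS]
    calc ∑ i : Fin n, (x ^ (i.1 + 1)) ^ (m + 1) / (m + 1)
        = (∑ i : Fin n, (x ^ (i.1 + 1)) ^ (m + 1)) / ((m : ℝ) + 1) := by
          rw [Finset.sum_div]
      _ ≤ (y / (1 - y)) / ((m : ℝ) + 1) := (div_le_div_iff_of_pos_right hm1).2 hgeom
      _ ≤ (x / (((m : ℝ) + 1) * (1 - x))) / ((m : ℝ) + 1) := (div_le_div_iff_of_pos_right hm1).2 hstep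
      _ = 1 / ((m : ℝ) + 1) ^ 2 * (x / (1 - x)) := by
          have hrw : (1 : ℝ) / ((m : ℝ) + 1) ^ 2 * (x / (1 - x))
              = x / (((m : ℝ) + 1) * (1 - x) * ((m : ℝ) + 1)) := by
            rw [div_mul_div_comm, one_mul]
            congr 1
            ring
          rw [div_div, hrw]
  -- summability of the bounding series
  have hbsum : Summable (fun m : ℕ => 1 / ((m : ℝ) + 1) ^ 2 * (x / (1 - x))) :=
    basel.summable.mul_right _
  have hgnn : ∀ m : ℕ, 0 ≤ ∑ i : Fin n, (x ^ (i.1 + 1)) ^ (m + 1) / (m + 1) := by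
    intro m
    exact Finset.sum_nonneg fun i _ => div_nonneg (pow_nonneg (pow_nonneg hx0.le _) _)
      (by positivity)
  have hgsum : Summable (fun m : ℕ => ∑ i : Fin n, (x ^ (i.1 + 1)) ^ (m + 1) / (m + 1)) :=
    Summable.of_nonneg_of_le hgnn hle hbsum
  calc ∑' m : ℕ, ∑ i : Fin n, (x ^ (i.1 + 1)) ^ (m + 1) / (m + 1)
      ≤ ∑' m : ℕ, 1 / ((m : ℝ) + 1) ^ 2 * (x / (1 - x)) :=
        Summable.tsum_le_tsum hle hgsum hbsum
    _ = (∑' m : ℕ, 1 / ((m : ℝ) + 1) ^ 2) * (x / (1 - x)) := tsum_mul_right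
    _ = π ^ 2 / 6 * (x / (1 - x)) := by rw [basel.tsum_eq]

end PartitionBoundAux

open PartitionBoundAux in
theorem partition_bound (k : ℕ) (hk : 1 ≤ k) :
    (Fintype.card (Nat.Partition k) : ℝ) ≤ Real.exp (π * Real.sqrt (2 * k / 3)) := by
  classical
  have hkpos : (0 : ℝ) < k := by exact_mod_cast hk
  set s : ℝ := Real.sqrt (6 * k) with hs
  have hs0 : 0 < s := Real.sqrt_pos.2 (by positivity)
  have hs2 : s ^ 2 = 6 * k := Real.sq_sqrt (by positivity)
  set t : ℝ := π / s with ht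
  have ht0 : 0 < t := div_pos Real.pi_pos hs0
  set x : ℝ := Real.exp (-t) with hx
  have hx0 : 0 < x := Real.exp_pos _
  have hx1 : x < 1 := Real.exp_lt_one_iff.2 (by linarith)
  have hx' : 0 < 1 - x := by linarith
  -- step 1: counting bound
  have h1 := card_mul_le k x hx0.le
  -- step 2: each truncated geometric sum ≤ (1 - x^(i+1))⁻¹
  have h2 : (∏ i : Fin k, ∑ j ∈ Finset.range (k + 1), x ^ (j * (i.1 + 1)))
      ≤ ∏ i : Fin k, (1 - x ^ (i.1 + 1))⁻¹ := by
    refine Finset.prod_le_prod (fun i _ => ?_) (fun i _ => geom_trunc_le x hx0.le hx1 i.1 (k + 1))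
    exact Finset.sum_nonneg fun j _ => pow_nonneg hx0.le _
  -- step 3: product = exp of sum of -log
  have hpos : ∀ i : Fin k, (0 : ℝ) < 1 - x ^ (i.1 + 1) := by
    intro i
    have h : x ^ (i.1 + 1) < 1 := pow_lt_one₀ hx0.le hx1 (by omega)
    linarith
  have h3 : (∏ i : Fin k, (1 - x ^ (i.1 + 1))⁻¹)
      = Real.exp (∑ i : Fin k, -Real.log (1 - x ^ (i.1 + 1))) := by
    rw [Real.exp_sum]
    refine Finset.prod_congr rfl fun i _ => ?_
    rw [Real.exp_neg, Real.exp_log (hpos i)]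
  -- step 4: log bound
  have h4 := log_sum_le k x hx0 hx1
  -- combine: card * x^k ≤ exp (π²/6 * (x/(1-x)))
  have h5 : (Fintype.card (Nat.Partition k) : ℝ) * x ^ k
      ≤ Real.exp (π ^ 2 / 6 * (x / (1 - x))) := by
    calc (Fintype.card (Nat.Partition k) : ℝ) * x ^ k
        ≤ ∏ i : Fin k, ∑ j ∈ Finset.range (k + 1), x ^ (j * (i.1 + 1)) := h1
      _ ≤ ∏ i : Fin k, (1 - x ^ (i.1 + 1))⁻¹ := h2
      _ = Real.exp (∑ i : Fin k, -Real.log (1 - x ^ (i.1 + 1))) := h3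
      _ ≤ Real.exp (π ^ 2 / 6 * (x / (1 - x))) := Real.exp_le_exp.2 h4
  -- x/(1-x) ≤ 1/t
  have hxt : x / (1 - x) ≤ 1 / t := by
    rw [div_le_div_iff₀ hx' ht0]
    -- x * t ≤ 1 - x  ⟺  exp(-t) (t + 1) ≤ 1 ⟺ t + 1 ≤ exp t
    have hexp : t + 1 ≤ Real.exp t := by
      have := Real.add_one_le_exp t
      linarith
    have : x * (t + 1) ≤ 1 := by
      rw [hx]
      calc Real.exp (-t) * (t + 1) ≤ Real.exp (-t) * Real.exp t :=
            mul_le_mul_of_nonneg_left hexp (Real.exp_pos _).le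
        _ = 1 := by rw [← Real.exp_add]; simp
    nlinarith
  -- x^k = exp (-t*k)
  have hxk : x ^ k = Real.exp (-(t * k)) := by
    rw [hx, ← Real.exp_nat_mul]
    ring_nf
  -- final exponent computation
  have hexp_eq : t * k + π ^ 2 / 6 * (1 / t) = π * Real.sqrt (2 * k / 3) := by
    have hsqrt : Real.sqrt (2 * k / 3) = s / 3 := by
      rw [show (2 * (k : ℝ) / 3) = (s / 3) ^ 2 by rw [div_pow, hs2]; ring]
      exact Real.sqrt_sq (by positivity)
    rw [hsqrt, ht]
    field_simp
    nlinarith [hs2, Real.pi_pos]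
  -- assemble
  have hcard : (Fintype.card (Nat.Partition k) : ℝ)
      ≤ Real.exp (π ^ 2 / 6 * (x / (1 - x))) * Real.exp (t * k) := by
    have hxkpos : 0 < x ^ k := pow_pos hx0 k
    calc (Fintype.card (Nat.Partition k) : ℝ)
        = (Fintype.card (Nat.Partition k) : ℝ) * x ^ k / x ^ k := by
          field_simp
      _ ≤ Real.exp (π ^ 2 / 6 * (x / (1 - x))) / x ^ k := (div_le_div_iff_of_pos_right hxkpos).2 h5
      _ = Real.exp (π ^ 2 / 6 * (x / (1 - x))) * Real.exp (t * k) := by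
          rw [hxk, Real.exp_neg]
          field_simp
  calc (Fintype.card (Nat.Partition k) : ℝ)
      ≤ Real.exp (π ^ 2 / 6 * (x / (1 - x))) * Real.exp (t * k) := hcard
    _ = Real.exp (π ^ 2 / 6 * (x / (1 - x)) + t * k) := (Real.exp_add _ _).symm
    _ ≤ Real.exp (π ^ 2 / 6 * (1 / t) + t * k) := by
        refine Real.exp_le_exp.2 ?_
        have : π ^ 2 / 6 * (x / (1 - x)) ≤ π ^ 2 / 6 * (1 / t) :=
          mul_le_mul_of_nonneg_left hxt (by positivity)
        linarith
    _ = Real.exp (π * Real.sqrt (2 * k / 3)) := by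
        rw [← hexp_eq]; ring_nf
end
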